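/- For every k ∈ {0,…,N−1} and every r ∈ {0,…,M−1}, the vector v_r ∈ ℂ^M with entries v_r(m) = (1/√M) e^{2πi m (rN + k)/(MN)} is an eigenvector of the twisted-circulant channel matrix G_k with eigenvalue H(k + rN), i.e., G_k v_r = H(k + rN) · v_r. Consequently U_k G_k U_k^H = H̄_k, so G_k is unitarily diagonalized by U_k with eigenvalues H(k), H(k+N), …, H(k+(M−1)N). -/

import Mathlib

open Finset Matrix

/-- For every `k ∈ {0,…,N−1}` and every `r ∈ {0,…,M−1}`, the vector
`v_r ∈ ℂ^M` with entries `v_r(m) = (1/√M) · exp(2πi m (rN + k)/(MN))` is an eigenvector of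
the twisted-circulant channel matrix `G_k` with eigenvalue `H(k + rN)`, i.e.
`G_k v_r = H(k + rN) • v_r`. Consequently `U_k G_k U_kᴴ = H̄_k`, so `G_k` is unitarily
diagonalized by `U_k` with eigenvalues `H(k), H(k+N), …, H(k+(M−1)N)`. -/
theorem stmt_5 (M N P : ℕ) (hM : 0 < M) (hN : 0 < N) (hP : 0 < P) (hPM : P ≤ M)
    (h : ℕ → ℂ) (Hf : ℕ → ℂ)
    (hHf : ∀ c : ℕ, Hf c = ∑ p ∈ range P,
      h p * Complex.exp (-2 * Real.pi * Complex.I * c * p / (M * N)))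
    (k : ℕ) (hk : k < N)
    (FM : Matrix (Fin M) (Fin M) ℂ)
    (hFM : ∀ r m : Fin M,
      FM r m = (1 / Real.sqrt M) * Complex.exp (-2 * Real.pi * Complex.I * (r : ℕ) * (m : ℕ) / M))
    (Λ : Matrix (Fin M) (Fin M) ℂ)
    (hΛ : Λ = Matrix.diagonal (fun m : Fin M =>
      Complex.exp (-2 * Real.pi * Complex.I * (m : ℕ) * k / (M * N))))
    (Hbar : Matrix (Fin M) (Fin M) ℂ)
    (hHbar : Hbar = Matrix.diagonal (fun r : Fin M => Hf (k + (r : ℕ) * N)))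
    (U : Matrix (Fin M) (Fin M) ℂ) (hU : U = FM * Λ)
    (γbar : Fin M → ℕ → ℂ)
    (hγbar : ∀ (ℓ : Fin M) (p : ℕ),
      γbar ℓ p = if p ≤ (ℓ : ℕ) then 1 else Complex.exp (-2 * Real.pi * Complex.I * k / N))
    (G : Matrix (Fin M) (Fin M) ℂ)
    (hG : ∀ ℓ m : Fin M, G ℓ m = ∑ p ∈ range P,
      h p * γbar ℓ p * (if ((m : ℕ) : ℤ) = (((ℓ : ℕ) : ℤ) - (p : ℤ)) % (M : ℤ) then 1 else 0))
    (v : Fin M → Fin M → ℂ)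
    (hv : ∀ r m : Fin M,
      v r m = (1 / Real.sqrt M) *
        Complex.exp (2 * Real.pi * Complex.I * (m : ℕ) * ((r : ℕ) * N + k) / (M * N))) :
    (∀ r : Fin M, G.mulVec (v r) = Hf (k + (r : ℕ) * N) • v r) ∧
    U * G * Uᴴ = Hbar := by
  have hM0 : (M : ℂ) ≠ 0 := Nat.cast_ne_zero.mpr hM.ne'
  have hN0 : (N : ℂ) ≠ 0 := Nat.cast_ne_zero.mpr hN.ne'
  have hsM : ((Real.sqrt M : ℝ) : ℂ) ≠ 0 := by
    simp only [ne_eq, Complex.ofReal_eq_zero]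
    positivity
  -- Part 1
  have part1 : ∀ r : Fin M, G.mulVec (v r) = Hf (k + (r : ℕ) * N) • v r := by
    intro r
    funext ℓ
    have lhs_eq : G.mulVec (v r) ℓ = ∑ p ∈ range P, ∑ m : Fin M,
        (h p * γbar ℓ p *
          (if ((m : ℕ) : ℤ) = (((ℓ : ℕ) : ℤ) - (p : ℤ)) % (M : ℤ) then 1 else 0)) * v r m := by
      simp only [Matrix.mulVec, dotProduct, hG, Finset.sum_mul]
      rw [Finset.sum_comm]
    have rhs_eq : (Hf (k + (r : ℕ) * N) • v r) ℓ = ∑ p ∈ range P,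
        h p * Complex.exp (-2 * Real.pi * Complex.I * ((k + (r : ℕ) * N : ℕ) : ℂ) * p / (M * N))
          * v r ℓ := by
      simp only [Pi.smul_apply, smul_eq_mul, hHf, Finset.sum_mul]
    rw [lhs_eq, rhs_eq]
    refine Finset.sum_congr rfl fun p hp => ?_
    have hpP : p < P := mem_range.mp hp
    have hpM : p < M := lt_of_lt_of_le hpP hPM
    have hℓM : (ℓ : ℕ) < M := ℓ.isLt
    -- delta-sum reduction
    have hsum : ∀ m₀ : Fin M, ((m₀ : ℕ) : ℤ) = (((ℓ : ℕ) : ℤ) - (p : ℤ)) % (M : ℤ) →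
        (∑ m : Fin M, (h p * γbar ℓ p *
          (if ((m : ℕ) : ℤ) = (((ℓ : ℕ) : ℤ) - (p : ℤ)) % (M : ℤ) then 1 else 0)) * v r m)
        = h p * γbar ℓ p * v r m₀ := by
      intro m₀ hm₀
      rw [Finset.sum_eq_single m₀]
      · rw [if_pos hm₀, mul_one]
      · intro m _ hne
        rw [if_neg, mul_zero, zero_mul]
        rw [← hm₀]
        intro hc
        exact hne (Fin.ext (by exact_mod_cast hc))
      · intro habs; exact absurd (Finset.mem_univ m₀) habs
    by_cases hpl : p ≤ (ℓ : ℕ)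
    · -- no wrap-around
      set m₀ : Fin M := ⟨(ℓ : ℕ) - p, by omega⟩ with hm₀def
      have hm₀ : ((m₀ : ℕ) : ℤ) = (((ℓ : ℕ) : ℤ) - (p : ℤ)) % (M : ℤ) := by
        have hmod : (((ℓ : ℕ) : ℤ) - (p : ℤ)) % (M : ℤ) = ((ℓ : ℕ) : ℤ) - (p : ℤ) :=
          Int.emod_eq_of_lt (by omega) (by omega)
        have hval : (m₀ : ℕ) = (ℓ : ℕ) - p := rfl
        omega
      rw [hsum m₀ hm₀, hγbar, if_pos hpl, mul_one, hv, hv]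
      have hcast : ((m₀ : ℕ) : ℂ) = ((ℓ : ℕ) : ℂ) - (p : ℂ) := by
        have : (m₀ : ℕ) = (ℓ : ℕ) - p := rfl
        rw [this]
        push_cast [hpl]
        ring
      rw [hcast]
      have key : Complex.exp (2 * Real.pi * Complex.I * (((ℓ : ℕ) : ℂ) - (p : ℂ)) *
            ((r : ℕ) * N + k) / (M * N))
          = Complex.exp (-2 * Real.pi * Complex.I * ((k + (r : ℕ) * N : ℕ) : ℂ) * p / (M * N)) *
            Complex.exp (2 * Real.pi * Complex.I * (ℓ : ℕ) * ((r : ℕ) * N + k) / (M * N)) := by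
        rw [← Complex.exp_add]
        congr 1
        push_cast
        field_simp
        ring
      rw [key]
      ring
    · -- wrap-around case
      push_neg at hpl
      set m₀ : Fin M := ⟨(ℓ : ℕ) + M - p, by omega⟩ with hm₀def
      have hm₀ : ((m₀ : ℕ) : ℤ) = (((ℓ : ℕ) : ℤ) - (p : ℤ)) % (M : ℤ) := by
        have h1 : (((ℓ : ℕ) : ℤ) - (p : ℤ) + (M : ℤ) * 1) % (M : ℤ)
            = (((ℓ : ℕ) : ℤ) - (p : ℤ)) % (M : ℤ) :=
          Int.add_mul_emod_self_left (((ℓ : ℕ) : ℤ) - (p : ℤ)) (M : ℤ) 1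
        have h2 : (((ℓ : ℕ) : ℤ) - (p : ℤ) + (M : ℤ) * 1) % (M : ℤ)
            = ((ℓ : ℕ) : ℤ) - (p : ℤ) + (M : ℤ) * 1 :=
          Int.emod_eq_of_lt (by omega) (by omega)
        have h3 : (m₀ : ℕ) = (ℓ : ℕ) + M - p := rfl
        omega
      rw [hsum m₀ hm₀, hγbar, if_neg (by omega), hv, hv]
      have hcast : ((m₀ : ℕ) : ℂ) = ((ℓ : ℕ) : ℂ) + (M : ℂ) - (p : ℂ) := by
        have : (m₀ : ℕ) = (ℓ : ℕ) + M - p := rfl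
        rw [this]
        push_cast [show p ≤ (ℓ : ℕ) + M by omega]
        ring
      rw [hcast]
      have key : Complex.exp (-2 * Real.pi * Complex.I * k / N) *
            Complex.exp (2 * Real.pi * Complex.I * (((ℓ : ℕ) : ℂ) + (M : ℂ) - (p : ℂ)) *
              ((r : ℕ) * N + k) / (M * N))
          = Complex.exp (-2 * Real.pi * Complex.I * ((k + (r : ℕ) * N : ℕ) : ℂ) * p / (M * N)) *
            Complex.exp (2 * Real.pi * Complex.I * (ℓ : ℕ) * ((r : ℕ) * N + k) / (M * N)) := by
        rw [← Complex.exp_add, ← Complex.exp_add]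
        have harg : -2 * (Real.pi : ℂ) * Complex.I * k / N +
              2 * Real.pi * Complex.I * (((ℓ : ℕ) : ℂ) + (M : ℂ) - (p : ℂ)) *
                ((r : ℕ) * N + k) / (M * N)
            = (-2 * Real.pi * Complex.I * ((k + (r : ℕ) * N : ℕ) : ℂ) * p / (M * N) +
              2 * Real.pi * Complex.I * (ℓ : ℕ) * ((r : ℕ) * N + k) / (M * N)) +
              ((r : ℕ) : ℤ) * (2 * Real.pi * Complex.I) := by
          push_cast
          field_simp
          ring
        rw [harg, Complex.exp_add, Complex.exp_int_mul_two_pi_mul_I, mul_one]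
      linear_combination (h p * ((1 : ℂ) / (Real.sqrt (M : ℝ) : ℂ))) * key
  refine ⟨part1, ?_⟩
  -- conjugate of v
  have hconj : ∀ r m : Fin M, (starRingEnd ℂ) (v r m)
      = (1 / (Real.sqrt M : ℂ)) *
        Complex.exp (-(2 * Real.pi * Complex.I * (m : ℕ) * ((r : ℕ) * N + k) / (M * N))) := by
    intro r m
    rw [hv, _root_.map_mul, ← Complex.exp_conj]
    congr 1
    · simp [map_div₀, Complex.conj_ofReal]
    · congr 1
      simp only [map_div₀, _root_.map_mul, map_add, map_ofNat, Complex.conj_I, Complex.conj_ofReal,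
        map_natCast]
      ring
  have hUv : ∀ r m : Fin M, U r m = (starRingEnd ℂ) (v r m) := by
    intro r m
    rw [hU, hΛ, Matrix.mul_diagonal, hFM, hconj, mul_assoc, ← Complex.exp_add]
    congr 2
    field_simp
    ring
  -- orthonormality
  have horth : ∀ s r : Fin M,
      (∑ ℓ : Fin M, (starRingEnd ℂ) (v s ℓ) * v r ℓ) = if s = r then 1 else 0 := by
    intro s r
    have hss : ((Real.sqrt M : ℝ) : ℂ) * ((Real.sqrt M : ℝ) : ℂ) = (M : ℂ) := by
      rw [← Complex.ofReal_mul, Real.mul_self_sqrt (Nat.cast_nonneg M)]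
      norm_cast
    have hterm : ∀ ℓ : Fin M, (starRingEnd ℂ) (v s ℓ) * v r ℓ
        = (1 / (M : ℂ)) *
          Complex.exp (2 * Real.pi * Complex.I * (((r : ℕ) : ℂ) - ((s : ℕ) : ℂ)) / M) ^ (ℓ : ℕ) := by
      intro ℓ
      rw [hconj, hv, ← Complex.exp_nat_mul, mul_mul_mul_comm, ← Complex.exp_add]
      congr 1
      · rw [div_mul_div_comm, one_mul, hss]
      · congr 1
        field_simp
        ring
    by_cases hsr : s = r
    · subst hsr
      simp only [hterm, sub_self, mul_zero, zero_div, Complex.exp_zero, one_pow, mul_one]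
      rw [Finset.sum_const, Finset.card_univ, Fintype.card_fin, nsmul_eq_mul]
      field_simp
      simp
    · set w : ℂ := Complex.exp (2 * Real.pi * Complex.I * (((r : ℕ) : ℂ) - ((s : ℕ) : ℂ)) / M)
        with hw
      have hwM : w ^ M = 1 := by
        rw [hw, ← Complex.exp_nat_mul]
        have : (M : ℂ) * (2 * Real.pi * Complex.I * (((r : ℕ) : ℂ) - ((s : ℕ) : ℂ)) / M)
            = (((r : ℤ) - (s : ℤ) : ℤ) : ℂ) * (2 * Real.pi * Complex.I) := by
          push_cast
          field_simp
        rw [this, Complex.exp_int_mul_two_pi_mul_I]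
      have hw1 : w ≠ 1 := by
        intro hcontra
        rw [hw, Complex.exp_eq_one_iff] at hcontra
        obtain ⟨n, hn⟩ := hcontra
        have h2pi : (2 * (Real.pi : ℂ) * Complex.I) ≠ 0 := by
          simp [Real.pi_ne_zero, Complex.I_ne_zero]
        have h4 : (2 * (Real.pi : ℂ) * Complex.I) * (((r : ℕ) : ℂ) - ((s : ℕ) : ℂ))
            = (2 * (Real.pi : ℂ) * Complex.I) * ((n : ℂ) * M) := by
          field_simp at hn
          linear_combination (2 * (Real.pi : ℂ) * Complex.I) * hn
        have h2 : ((r : ℕ) : ℂ) - ((s : ℕ) : ℂ) = (n : ℂ) * M := mul_left_cancel₀ h2pi h4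
        have h3 : ((r : ℕ) : ℤ) - ((s : ℕ) : ℤ) = n * M := by exact_mod_cast h2
        have hrM : (r : ℕ) < M := r.isLt
        have hsMlt : (s : ℕ) < M := s.isLt
        have hdvd : (M : ℤ) ∣ ((r : ℕ) : ℤ) - ((s : ℕ) : ℤ) := ⟨n, by rw [h3]; ring⟩
        have habs : |((r : ℕ) : ℤ) - ((s : ℕ) : ℤ)| < (M : ℤ) := by
          rw [abs_sub_lt_iff]
          omega
        have := Int.eq_zero_of_abs_lt_dvd hdvd habs
        exact hsr (Fin.ext (by omega))
      have hzero : ∑ ℓ : Fin M, w ^ (ℓ : ℕ) = 0 := by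
        rw [Fin.sum_univ_eq_sum_range (fun i => w ^ i), geom_sum_eq hw1, hwM, sub_self, zero_div]
      simp only [hterm, ← Finset.mul_sum, ← hw, hzero, mul_zero, if_neg hsr]
  ext s r
  rw [Matrix.mul_assoc, Matrix.mul_apply]
  have hGU : ∀ ℓ : Fin M, (G * Uᴴ) ℓ r = Hf (k + (r : ℕ) * N) * v r ℓ := by
    intro ℓ
    rw [Matrix.mul_apply]
    have hUH : ∀ m, Uᴴ m r = v r m := by
      intro m
      rw [Matrix.conjTranspose_apply, hUv]
      exact Complex.conj_conj _
    simp only [hUH]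
    have h5 := congrFun (part1 r) ℓ
    simpa [Matrix.mulVec, dotProduct, smul_eq_mul] using h5
  calc (∑ ℓ : Fin M, U s ℓ * (G * Uᴴ) ℓ r)
      = Hf (k + (r : ℕ) * N) * ∑ ℓ : Fin M, (starRingEnd ℂ) (v s ℓ) * v r ℓ := by
        rw [Finset.mul_sum]
        refine Finset.sum_congr rfl fun ℓ _ => ?_
        rw [hGU, hUv]
        ring
    _ = (if s = r then Hf (k + (r : ℕ) * N) else 0) := by
        rw [horth]
        split <;> simp
    _ = Hbar s r := by
        rw [hHbar]
        by_cases hsr : s = r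
        · subst hsr
          simp [Matrix.diagonal_apply_eq]
        · simp [Matrix.diagonal_apply_ne _ hsr, hsr]
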